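/- Let q, a, b ∈ ℂ with |q| < 1, q ≠ 0, and suppose a q^j ≠ 1, b q^j ≠ 1 and a b q^{2j-1} ≠ 1 for all integers j ≥ 0. Define g(x) = ∑_{n=0}^∞ (q;q)_∞ (x;q)_∞ (b;q)_∞ · (x b q^{n-1};q)_n q^n / ((q;q)_n (x;q)_n (b;q)_n) (an absolutely convergent series). Then g satisfies the recurrence g(a) − (1 − a)·g(a q) − a q·g(a q²) = 0. -/

import Mathlib

/-- The finite q-shifted factorial `(a;q)_n = ∏_{j=0}^{n-1} (1 - a q^j)`. -/
noncomputable def qPoch (q a : ℂ) (n : ℕ) : ℂ := ∏ j ∈ Finset.range n, (1 - a * q ^ j)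

/-- The infinite q-shifted factorial `(a;q)_∞ = ∏_{j=0}^{∞} (1 - a q^j)`. -/
noncomputable def qPochInf (q a : ℂ) : ℂ := ∏' j : ℕ, (1 - a * q ^ j)

lemma qPoch_succ (q y : ℂ) (n : ℕ) : qPoch q y (n+1) = qPoch q y n * (1 - y * q ^ n) :=
  Finset.prod_range_succ _ _

lemma qPoch_shift (q y : ℂ) (n : ℕ) : qPoch q y (n+1) = qPoch q (y*q) n * (1 - y) := by
  rw [qPoch, Finset.prod_range_succ']
  simp only [pow_zero, mul_one, qPoch]
  congr 1
  exact Finset.prod_congr rfl fun j _ => by ring_nf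

lemma qPoch_ne_zero {q y : ℂ} (hy : ∀ j : ℕ, y * q ^ j ≠ 1) (n : ℕ) : qPoch q y n ≠ 0 :=
  Finset.prod_ne_zero_iff.2 fun j _ => sub_ne_zero_of_ne (Ne.symm (hy j))

-- summability of logs
lemma summable_log {q : ℂ} (hq : ‖q‖ < 1) (y : ℂ) :
    Summable fun j : ℕ => Complex.log (1 - y * q ^ j) := by
  have hqn : ‖q‖ < 1 := hq
  apply Summable.of_norm_bounded_eventually_nat (g := fun j => 3/2 * (‖y‖ * ‖q‖^j))
  · exact ((summable_geometric_of_lt_one (norm_nonneg q) hqn).mul_left (3/2*‖y‖)).congr (fun j => by ring)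
  · have h0 : Filter.Tendsto (fun j : ℕ => ‖y‖ * ‖q‖^j) Filter.atTop (nhds 0) := by
      simpa using (tendsto_pow_atTop_nhds_zero_of_lt_one (norm_nonneg q) hqn).const_mul ‖y‖
    filter_upwards [h0.eventually_le_const (by norm_num : (0:ℝ) < 1/2)] with j hj
    have hb : ‖-(y * q ^ j)‖ ≤ 1/2 := by
      rw [norm_neg, norm_mul, norm_pow]; exact hj
    have := Complex.norm_log_one_add_half_le_self hb
    rw [show (1 : ℂ) + -(y * q^j) = 1 - y * q^j by ring] at this
    calc ‖Complex.log (1 - y * q ^ j)‖ ≤ 3/2 * ‖-(y * q^j)‖ := this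
      _ = 3/2 * (‖y‖ * ‖q‖^j) := by rw [norm_neg, norm_mul, norm_pow]

lemma multipliable_qp {q : ℂ} (hq : ‖q‖ < 1) {y : ℂ} (hy : ∀ j : ℕ, y * q ^ j ≠ 1) :
    Multipliable fun j : ℕ => 1 - y * q ^ j := by
  have := Complex.multipliable_of_summable_log (f := fun j : ℕ => 1 - y * q ^ j) (summable_log hq y)
  exact this

lemma qPochInf_ne_zero {q : ℂ} (hq : ‖q‖ < 1) {y : ℂ} (hy : ∀ j : ℕ, y * q ^ j ≠ 1) :
    qPochInf q y ≠ 0 := by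
  have := Complex.cexp_tsum_eq_tprod (f := fun j : ℕ => 1 - y * q ^ j)
    (fun j => sub_ne_zero_of_ne (Ne.symm (hy j))) (summable_log hq y)
  rw [qPochInf, ← this]
  exact Complex.exp_ne_zero _

lemma tendsto_qPoch {q : ℂ} (hq : ‖q‖ < 1) {y : ℂ} (hy : ∀ j : ℕ, y * q ^ j ≠ 1) :
    Filter.Tendsto (fun n => qPoch q y n) Filter.atTop (nhds (qPochInf q y)) :=
  (multipliable_qp hq hy).hasProd.tendsto_prod_nat

lemma qPoch_lower {q : ℂ} (hq : ‖q‖ < 1) {y : ℂ} (hy : ∀ j : ℕ, y * q ^ j ≠ 1) :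
    ∃ δ > 0, ∀ n, δ ≤ ‖qPoch q y n‖ := by
  have hL : qPochInf q y ≠ 0 := qPochInf_ne_zero hq hy
  have hLpos : 0 < ‖qPochInf q y‖ := norm_pos_iff.2 hL
  have ht : Filter.Tendsto (fun n => ‖qPoch q y n‖) Filter.atTop (nhds ‖qPochInf q y‖) :=
    (tendsto_qPoch hq hy).norm
  obtain ⟨N, hN⟩ := (ht.eventually_const_le (by linarith : ‖qPochInf q y‖/2 < ‖qPochInf q y‖)).exists_forall_of_atTop
  set m := (Finset.range (N+1)).inf' (by simp) (fun n => ‖qPoch q y n‖) with hm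
  refine ⟨min (‖qPochInf q y‖/2) m, ?_, ?_⟩
  · apply lt_min (by linarith)
    rw [hm, Finset.lt_inf'_iff]
    exact fun n _ => norm_pos_iff.2 (qPoch_ne_zero hy n)
  · intro n
    rcases le_or_gt N n with h | h
    · exact le_trans (min_le_left _ _) (hN n h)
    · refine le_trans (min_le_right _ _) ?_
      exact Finset.inf'_le _ (Finset.mem_range.2 (by omega))

lemma qPoch_upper {q : ℂ} (hq : ‖q‖ < 1) (y : ℂ) (m n : ℕ) :
    ‖qPoch q (y * q ^ m) n‖ ≤ Real.exp (‖y‖ * (1 - ‖q‖)⁻¹) := by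
  have hqn : ‖q‖ < 1 := hq
  have h1q : 0 < 1 - ‖q‖ := by linarith
  rw [qPoch]
  calc ‖∏ j ∈ Finset.range n, (1 - y * q ^ m * q ^ j)‖
      = ∏ j ∈ Finset.range n, ‖1 - y * q ^ m * q ^ j‖ := norm_prod _ _
    _ ≤ ∏ j ∈ Finset.range n, Real.exp (‖y‖ * ‖q‖ ^ j) := by
        apply Finset.prod_le_prod (fun j _ => norm_nonneg _)
        intro j _
        have h1 : ‖1 - y * q ^ m * q ^ j‖ ≤ 1 + ‖y‖ * ‖q‖^m * ‖q‖^j := by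
          calc ‖1 - y * q ^ m * q ^ j‖ ≤ ‖(1:ℂ)‖ + ‖y * q ^ m * q ^ j‖ := norm_sub_le _ _
            _ = 1 + ‖y‖ * ‖q‖^m * ‖q‖^j := by simp [norm_mul, norm_pow]
        have h2 : ‖y‖ * ‖q‖^m * ‖q‖^j ≤ ‖y‖ * ‖q‖^j := by
          have hm1 : ‖q‖^m ≤ 1 := pow_le_one₀ (norm_nonneg q) (le_of_lt hqn)
          calc ‖y‖ * ‖q‖^m * ‖q‖^j = (‖y‖ * ‖q‖^j) * ‖q‖^m := by ring
            _ ≤ (‖y‖ * ‖q‖^j) * 1 := mul_le_mul_of_nonneg_left hm1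
                (mul_nonneg (norm_nonneg y) (pow_nonneg (norm_nonneg q) j))
            _ = ‖y‖ * ‖q‖^j := mul_one _
        calc ‖1 - y * q ^ m * q ^ j‖ ≤ 1 + ‖y‖ * ‖q‖^j := by linarith
          _ ≤ Real.exp (‖y‖ * ‖q‖^j) := Real.add_one_le_exp _ |>.trans_eq' (by ring_nf)
    _ = Real.exp (∑ j ∈ Finset.range n, ‖y‖ * ‖q‖ ^ j) := (Real.exp_sum _ _).symm
    _ ≤ Real.exp (‖y‖ * (1 - ‖q‖)⁻¹) := by
        apply Real.exp_le_exp.2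
        rw [← Finset.mul_sum]
        apply mul_le_mul_of_nonneg_left _ (norm_nonneg y)
        calc ∑ j ∈ Finset.range n, ‖q‖ ^ j
            ≤ ∑' j : ℕ, ‖q‖ ^ j := Summable.sum_le_tsum _ (fun j _ => pow_nonneg (norm_nonneg q) j)
              (summable_geometric_of_lt_one (norm_nonneg q) hqn)
          _ = (1 - ‖q‖)⁻¹ := tsum_geometric_of_lt_one (norm_nonneg q) hqn

noncomputable def trm (q b x : ℂ) (n : ℕ) : ℂ :=
  qPochInf q q * qPochInf q x * qPochInf q b *
    (qPoch q (x * b * q ^ ((n : ℤ) - 1)) n * q ^ n /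
      (qPoch q q n * qPoch q x n * qPoch q b n))

lemma hq' {q : ℂ} (hq : ‖q‖ < 1) (hq0 : q ≠ 0) : ∀ j : ℕ, q * q ^ j ≠ 1 := by
  intro j h
  have : ‖q * q ^ j‖ < 1 := by
    rw [norm_mul, norm_pow]
    calc ‖q‖ * ‖q‖^j ≤ ‖q‖ * 1 :=
        mul_le_mul_of_nonneg_left (pow_le_one₀ (norm_nonneg q) (le_of_lt hq)) (norm_nonneg q)
      _ = ‖q‖ := mul_one _
      _ < 1 := hq
  rw [h] at this
  norm_num at this

lemma summable_trm {q b x : ℂ} (hq : ‖q‖ < 1) (hq0 : q ≠ 0)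
    (hx : ∀ j : ℕ, x * q ^ j ≠ 1) (hb : ∀ j : ℕ, b * q ^ j ≠ 1) :
    Summable (trm q b x) := by
  obtain ⟨δ₁, hδ₁, h1⟩ := qPoch_lower hq (hq' hq hq0)
  obtain ⟨δ₂, hδ₂, h2⟩ := qPoch_lower hq hx
  obtain ⟨δ₃, hδ₃, h3⟩ := qPoch_lower hq hb
  have h1q : (0:ℝ) < 1 - ‖q‖ := by
    have : ‖q‖ < 1 := hq
    linarith
  set E : ℝ := Real.exp (‖x*b‖ * (1 - ‖q‖)⁻¹) with hE
  set C : ℝ := ‖qPochInf q q‖ * ‖qPochInf q x‖ * ‖qPochInf q b‖ * E / (δ₁ * δ₂ * δ₃) with hC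
  apply Summable.of_norm_bounded (g := fun n => C * ‖q‖^n)
  · exact (summable_geometric_of_lt_one (norm_nonneg q) hq).mul_left C
  · intro n
    have hP : ‖qPoch q (x * b * q ^ ((n : ℤ) - 1)) n‖ ≤ E := by
      rw [hE]
      cases n with
      | zero =>
        simp only [qPoch, Finset.range_zero, Finset.prod_empty, norm_one]
        exact Real.one_le_exp (mul_nonneg (norm_nonneg _) (inv_nonneg.2 (le_of_lt h1q)))
      | succ m =>
        have harg : x * b * q ^ (((m+1 : ℕ) : ℤ) - 1) = (x*b) * q ^ m := by
          push_cast
          rw [show ((m:ℤ) + 1 - 1) = (m:ℤ) by ring, zpow_natCast]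
        rw [harg]
        exact qPoch_upper hq (x*b) m (m+1)
    rw [trm]
    simp only [norm_mul, norm_div, norm_pow]
    calc ‖qPochInf q q‖ * ‖qPochInf q x‖ * ‖qPochInf q b‖ *
          (‖qPoch q (x * b * q ^ ((n : ℤ) - 1)) n‖ * ‖q‖^n /
            (‖qPoch q q n‖ * ‖qPoch q x n‖ * ‖qPoch q b n‖))
        ≤ ‖qPochInf q q‖ * ‖qPochInf q x‖ * ‖qPochInf q b‖ *
          (E * ‖q‖^n / (δ₁ * δ₂ * δ₃)) := by
          gcongr <;> first | exact hP | exact h1 n | exact h2 n | exact h3 n | positivity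
      _ = C * ‖q‖^n := by rw [hC]; ring

lemma qPochInf_shift {q : ℂ} (hq : ‖q‖ < 1) {y : ℂ} (hy : ∀ j : ℕ, y * q ^ j ≠ 1) :
    qPochInf q y = (1 - y) * qPochInf q (y * q) := by
  have hyq : ∀ j : ℕ, (y*q) * q ^ j ≠ 1 := by
    intro j
    have : y*q*q^j = y*q^(j+1) := by ring
    rw [this]; exact hy (j+1)
  have hm : Multipliable (fun n : ℕ => 1 - y * q ^ (n+1)) :=
    (multipliable_qp hq hyq).congr (fun j => by ring_nf)
  have h := tprod_eq_zero_mul' (f := fun j : ℕ => 1 - y * q ^ j) hm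
  rw [qPochInf, h, qPochInf]
  simp only [pow_zero, mul_one]
  congr 1
  apply tprod_congr
  intro j
  ring_nf

lemma key (Cq Cb I2 Qn An Bn X Y P3 q a b u v : ℂ) (hv : v = q*u)
    (hqn1 : (1:ℂ) - q*u ≠ 0) (han : (1:ℂ) - a*u ≠ 0) (hbn : (1:ℂ) - b*u ≠ 0)
    (hQn : Qn ≠ 0) (hAn : An ≠ 0) (hBn : Bn ≠ 0) (hX : X ≠ 0) (hY : Y ≠ 0)
    (rX : X * (1-a) = An * (1-a*u) * (1-a*q*u))
    (rY : Y * ((1-a)*(1-a*q)) = An * (1-a*u) * (1-a*q*u)) :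
    Cq * ((1-a)*((1-a*q)*I2)) * Cb * (P3*(1-a*b*u) * v / (Qn*(1-q*u) * (An*(1-a*u)) * (Bn*(1-b*u))))
    - (1-a) * (Cq * ((1-a*q)*I2) * Cb * (P3*(1-a*b*v*u) * v / (Qn*(1-q*u) * X * (Bn*(1-b*u)))))
    = a*q*(Cq * I2 * Cb * (P3 * u / (Qn * Y * Bn))) := by
  subst hv
  have hD : Qn*(1-q*u)*An*(1-a*u)*(1-b*u)*Bn*X*Y ≠ 0 := by
    apply_rules [mul_ne_zero]
  refine mul_right_cancel₀ hD ?_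
  have h₁ : P3*(1-a*b*u) * (q*u) / (Qn*(1-q*u) * (An*(1-a*u)) * (Bn*(1-b*u)))
      * (Qn*(1-q*u)*An*(1-a*u)*(1-b*u)*Bn*X*Y)
      = P3*(1-a*b*u) * (q*u) * (X*Y) := by
    rw [show Qn*(1-q*u)*An*(1-a*u)*(1-b*u)*Bn*X*Y
      = (Qn*(1-q*u) * (An*(1-a*u)) * (Bn*(1-b*u))) * (X*Y) by ring, ← mul_assoc,
      div_mul_cancel₀ _ (by apply_rules [mul_ne_zero])]
  have h₂ : P3*(1-a*b*(q*u)*u) * (q*u) / (Qn*(1-q*u) * X * (Bn*(1-b*u)))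
      * (Qn*(1-q*u)*An*(1-a*u)*(1-b*u)*Bn*X*Y)
      = P3*(1-a*b*(q*u)*u) * (q*u) * (An*(1-a*u)*Y) := by
    rw [show Qn*(1-q*u)*An*(1-a*u)*(1-b*u)*Bn*X*Y
      = (Qn*(1-q*u) * X * (Bn*(1-b*u))) * (An*(1-a*u)*Y) by ring, ← mul_assoc,
      div_mul_cancel₀ _ (by apply_rules [mul_ne_zero])]
  have h₃ : P3 * u / (Qn * Y * Bn) * (Qn*(1-q*u)*An*(1-a*u)*(1-b*u)*Bn*X*Y)
      = P3 * u * ((1-q*u)*An*(1-a*u)*(1-b*u)*X) := by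
    rw [show Qn*(1-q*u)*An*(1-a*u)*(1-b*u)*Bn*X*Y
      = (Qn * Y * Bn) * ((1-q*u)*An*(1-a*u)*(1-b*u)*X) by ring, ← mul_assoc,
      div_mul_cancel₀ _ (by apply_rules [mul_ne_zero])]
  linear_combination (Cq*((1-a)*((1-a*q)*I2))*Cb) * h₁ - ((1-a)*(Cq*((1-a*q)*I2)*Cb)) * h₂
    - (a*q*(Cq*I2*Cb)) * h₃
    + (Cq*I2*Cb*P3*q*u*(An*(1-a*u)*(1-a*b*q*u*u))) * rX
    + (Cq*I2*Cb*P3*q*u*((1-a*b*u)*X - (1-a*b*q*u*u)*An*(1-a*u))) * rY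

set_option maxHeartbeats 1600000 in
lemma telescope {q a b : ℂ} (hq : ‖q‖ < 1) (hq0 : q ≠ 0)
    (ha : ∀ j : ℕ, a * q ^ j ≠ 1) (hb : ∀ j : ℕ, b * q ^ j ≠ 1) (n : ℕ) :
    trm q b a (n+1) - (1 - a) * trm q b (a*q) (n+1) = a * q * trm q b (a*q^2) n := by
  have haq : ∀ j : ℕ, (a*q) * q ^ j ≠ 1 := by
    intro j
    have : a*q*q^j = a*q^(j+1) := by ring
    rw [this]; exact ha (j+1)
  have haq2 : ∀ j : ℕ, (a*q^2) * q ^ j ≠ 1 := by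
    intro j
    have : a*q^2*q^j = a*q^(j+2) := by ring
    rw [this]; exact ha (j+2)
  -- argument normalizations
  have e1 : a * b * q ^ (((n+1:ℕ):ℤ) - 1) = a*b*q^n := by
    push_cast
    rw [show ((n:ℤ)+1-1) = (n:ℤ) by ring, zpow_natCast]
  have e2 : a * q * b * q ^ (((n+1:ℕ):ℤ) - 1) = a*b*q^(n+1) := by
    push_cast
    rw [show ((n:ℤ)+1-1) = (n:ℤ) by ring, zpow_natCast]
    ring
  have e3 : a * q^2 * b * q ^ ((n:ℤ) - 1) = a*b*q^(n+1) := by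
    have h2 : (q:ℂ)^(2:ℕ) * q^((n:ℤ)-1) = q^(n+1) := by
      rw [← zpow_natCast q 2, ← zpow_add₀ hq0,
        show ((2:ℕ):ℤ)+((n:ℤ)-1) = ((n+1:ℕ):ℤ) by push_cast; ring, zpow_natCast]
    calc a*q^2*b*q^((n:ℤ)-1) = a*b*((q:ℂ)^(2:ℕ)*q^((n:ℤ)-1)) := by ring
      _ = a*b*q^(n+1) := by rw [h2]
  -- splitting of finite products
  have p1 : qPoch q (a*b*q^n) (n+1) = qPoch q (a*b*q^(n+1)) n * (1 - a*b*q^n) := by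
    rw [qPoch_shift, show (a*b*q^n)*q = a*b*q^(n+1) by ring]
  have p2 : qPoch q (a*b*q^(n+1)) (n+1)
      = qPoch q (a*b*q^(n+1)) n * (1 - a*b*q^(n+1)*q^n) := qPoch_succ _ _ _
  -- nonvanishing
  have h1a : (1:ℂ) - a ≠ 0 := sub_ne_zero_of_ne (Ne.symm (by simpa using ha 0))
  have h1aq : (1:ℂ) - a*q ≠ 0 := sub_ne_zero_of_ne (Ne.symm (by simpa using ha 1))
  have han : (1:ℂ) - a*q^n ≠ 0 := sub_ne_zero_of_ne (Ne.symm (ha n))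
  have han1 : (1:ℂ) - a*q^(n+1) ≠ 0 := sub_ne_zero_of_ne (Ne.symm (ha (n+1)))
  have hqn1 : (1:ℂ) - q*q^n ≠ 0 := sub_ne_zero_of_ne (Ne.symm (hq' hq hq0 n))
  have hbn : (1:ℂ) - b*q^n ≠ 0 := sub_ne_zero_of_ne (Ne.symm (hb n))
  have hQn : qPoch q q n ≠ 0 := qPoch_ne_zero (hq' hq hq0) n
  have hAn : qPoch q a n ≠ 0 := qPoch_ne_zero ha n
  have hBn : qPoch q b n ≠ 0 := qPoch_ne_zero hb n
  -- shifted finite products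
  have eA1 : qPoch q a (n+1) = qPoch q a n * (1 - a*q^n) := qPoch_succ _ _ _
  have eA2 : qPoch q a (n+2) = qPoch q a n * (1 - a*q^n) * (1 - a*q^(n+1)) := by
    rw [qPoch_succ, qPoch_succ]
  have rX : qPoch q (a*q) (n+1) * (1-a)
      = qPoch q a n * (1 - a*q^n) * (1 - a*q*q^n) := by
    rw [← qPoch_shift q a (n+1), eA2]; ring
  have rY : qPoch q (a*q^2) n * ((1-a)*(1-a*q))
      = qPoch q a n * (1 - a*q^n) * (1 - a*q*q^n) := by
    have h := qPoch_shift q a (n+1)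
    have h2 := qPoch_shift q (a*q) n
    rw [show (a*q)*q = a*q^2 by ring] at h2
    rw [h2, eA2] at h
    linear_combination -h
  have hX : qPoch q (a*q) (n+1) ≠ 0 := qPoch_ne_zero haq (n+1)
  have hY : qPoch q (a*q^2) n ≠ 0 := qPoch_ne_zero haq2 n
  -- infinite products
  have i1 : qPochInf q a = (1-a) * qPochInf q (a*q) := qPochInf_shift hq ha
  have i2 : qPochInf q (a*q) = (1-a*q) * qPochInf q (a*q^2) := by
    have := qPochInf_shift hq haq
    rwa [show (a*q)*q = a*q^2 by ring] at this
  have eQ : qPoch q q (n+1) = qPoch q q n * (1 - q*q^n) := qPoch_succ _ _ _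
  have eB : qPoch q b (n+1) = qPoch q b n * (1 - b*q^n) := qPoch_succ _ _ _
  rw [trm, trm, trm, e1, e2, e3, p1, p2, eA1, i1, i2, eQ, eB]
  exact key (qPochInf q q) (qPochInf q b) (qPochInf q (a*q^2)) (qPoch q q n) (qPoch q a n)
    (qPoch q b n) (qPoch q (a*q) (n+1)) (qPoch q (a*q^2) n) (qPoch q (a*b*q^(n+1)) n)
    q a b (q^n) (q^(n+1)) (pow_succ' q n) hqn1 han hbn hQn hAn hBn hX hY rX rY

/-- The series `g(x) = ∑_{n=0}^∞ (q,x,b;q)_∞ (x b q^{n-1};q)_n q^n / ((q,x,b;q)_n)`. -/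
noncomputable def g₁ (q b x : ℂ) : ℂ :=
  ∑' n : ℕ, qPochInf q q * qPochInf q x * qPochInf q b *
    (qPoch q (x * b * q ^ ((n : ℤ) - 1)) n * q ^ n /
      (qPoch q q n * qPoch q x n * qPoch q b n))

/-- The recurrence (2.5): `g(a) - (1-a) g(aq) - aq g(aq²) = 0`. -/
theorem g_recurrence_one (q a b : ℂ) (hq : ‖q‖ < 1) (hq0 : q ≠ 0)
    (ha : ∀ j : ℕ, a * q ^ j ≠ 1) (hb : ∀ j : ℕ, b * q ^ j ≠ 1)
    (hab : ∀ j : ℕ, a * b * q ^ (2 * (j : ℤ) - 1) ≠ 1) :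
    g₁ q b a - (1 - a) * g₁ q b (a * q) - a * q * g₁ q b (a * q ^ 2) = 0 := by
  have haq : ∀ j : ℕ, (a*q) * q ^ j ≠ 1 := by
    intro j
    have : a*q*q^j = a*q^(j+1) := by ring
    rw [this]; exact ha (j+1)
  have haq2 : ∀ j : ℕ, (a*q^2) * q ^ j ≠ 1 := by
    intro j
    have : a*q^2*q^j = a*q^(j+2) := by ring
    rw [this]; exact ha (j+2)
  have hg : ∀ x : ℂ, g₁ q b x = ∑' n, trm q b x n := fun _ => rfl
  have Sa := summable_trm hq hq0 ha hb
  have Saq := summable_trm hq hq0 haq hb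
  have Saq2 := summable_trm hq hq0 haq2 hb
  have h1 : Summable (fun n => trm q b a n - (1-a) * trm q b (a*q) n) :=
    Sa.sub (Saq.mul_left _)
  have base : trm q b a 0 - (1-a) * trm q b (a*q) 0 = 0 := by
    simp only [trm, qPoch, Finset.range_zero, Finset.prod_empty, pow_zero, mul_one, one_mul,
      div_one, one_div]
    rw [qPochInf_shift hq ha]
    ring
  have h2 : ∑' n, (trm q b a n - (1-a) * trm q b (a*q) n)
      = ∑' n, a * q * trm q b (a*q^2) n := by
    rw [Summable.tsum_eq_zero_add h1, base, zero_add]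
    exact tsum_congr fun n => telescope hq hq0 ha hb n
  have h3 : g₁ q b a - (1 - a) * g₁ q b (a * q)
      = ∑' n, (trm q b a n - (1-a) * trm q b (a*q) n) := by
    rw [hg, hg, ← tsum_mul_left, ← Summable.tsum_sub Sa (Saq.mul_left _)]
  rw [h3, h2, hg, ← tsum_mul_left]
  ring
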